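/- arXiv:2409.00505 — 6 statements merged into one kernel-verified Lean document; each statement's English description precedes it below -/
import Mathlib

section
/- Let p be an odd prime and set f = ⌊log₂ p⌋ and t = 2(2^(f+1) − p). Then 0 < t ≤ 2p, t is not divisible by p, and the 2-adic valuation of t² − 4p² equals f + 4. -/
theorem stmt_1 (p : ℕ) (hp : p.Prime) (hodd : Odd p)
    (f : ℕ) (hf : f = Nat.log 2 p)
    (t : ℤ) (ht : t = 2 * (2 ^ (f + 1) - (p : ℤ))) :
    0 < t ∧ t ≤ 2 * p ∧ ¬ (p : ℤ) ∣ t ∧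
      padicValInt 2 (t ^ 2 - 4 * (p : ℤ) ^ 2) = f + 4 := by
  have hp2 : 2 ≤ p := hp.two_le
  have hpodd : p % 2 = 1 := Nat.odd_iff.mp hodd
  have hp3 : 3 ≤ p := by omega
  have h1 : 2 ^ f ≤ p := by rw [hf]; exact Nat.pow_log_le_self 2 (by omega)
  have h2 : p < 2 ^ (f + 1) := by rw [hf]; exact Nat.lt_pow_succ_log_self (by norm_num) p
  have hf1 : 1 ≤ f := by
    rw [hf]
    exact (Nat.le_log_iff_pow_le (by norm_num) (by omega)).mpr (by simpa using hp2)
  have heven : 2 ∣ 2 ^ f := dvd_pow_self 2 (by omega)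
  have hne : 2 ^ f < p := by
    rcases Nat.lt_or_ge (2 ^ f) p with h | h
    · exact h
    · exfalso; omega
  have hlt : (p : ℤ) < 2 ^ (f + 1) := by exact_mod_cast h2
  have hle : (2 : ℤ) ^ f < (p : ℤ) := by exact_mod_cast hne
  have hpow : (2 : ℤ) ^ (f + 1) = 2 * 2 ^ f := by ring
  refine ⟨by rw [ht]; linarith, by rw [ht]; rw [hpow] at hlt ⊢; linarith, ?_, ?_⟩
  · intro hdvd
    rw [ht] at hdvd
    have h2p : (p : ℤ) ∣ 2 * (p : ℤ) := ⟨2, by ring⟩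
    have hd : (p : ℤ) ∣ 2 ^ (f + 2) := by
      have := dvd_add hdvd h2p
      have heq : 2 * (2 ^ (f + 1) - (p : ℤ)) + 2 * (p : ℤ) = 2 ^ (f + 2) := by ring
      rwa [heq] at this
    have hd' : p ∣ 2 ^ (f + 2) := by exact_mod_cast hd
    have hle2 : p ≤ 2 := Nat.le_of_dvd (by norm_num) (Nat.Prime.dvd_of_dvd_pow hp hd')
    omega
  · have key : t ^ 2 - 4 * (p : ℤ) ^ 2 = 2 ^ (f + 4) * ((2 : ℤ) ^ f - p) := by
      rw [ht]; ring
    rw [key]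
    haveI : Fact (Nat.Prime 2) := ⟨Nat.prime_two⟩
    rw [padicValInt.mul (by positivity) (sub_ne_zero_of_ne (ne_of_lt hle))]
    have hA : padicValInt 2 ((2 : ℤ) ^ (f + 4)) = f + 4 := by
      unfold padicValInt
      rw [Int.natAbs_pow]
      simp [padicValNat.prime_pow]
    have hnat : ((2 : ℤ) ^ f - (p : ℤ)).natAbs = p - 2 ^ f := by
      have hc : ((2 : ℤ) ^ f) = ((2 ^ f : ℕ) : ℤ) := by push_cast; ring
      rw [hc]
      omega
    have hB : padicValInt 2 ((2 : ℤ) ^ f - p) = 0 := by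
      unfold padicValInt
      rw [hnat]
      exact padicValNat.eq_zero_of_not_dvd (by omega)
    rw [hA, hB]
end

section
/- Let μ ≥ 3, and let a, c be odd integers with 0 < a < 2^(μ−1), |c| < 2^μ, and c² ≡ a² (mod 2^(μ+2)). Then c = a or c = −a. -/
theorem stmt_12 (μ : ℕ) (hμ : 3 ≤ μ) (a c : ℤ)
    (ha_odd : Odd a) (ha_pos : 0 < a) (ha_lt : a < 2 ^ (μ - 1))
    (hc_odd : Odd c) (hc_lt : |c| < 2 ^ μ)
    (hdvd : (2 : ℤ) ^ (μ + 2) ∣ (c ^ 2 - a ^ 2)) :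
    c = a ∨ c = -a := by
  obtain ⟨m, hm⟩ := ha_odd
  obtain ⟨k, hk⟩ := hc_odd
  -- c - a = 2*(k-m), c + a = 2*(k+m+1)
  set x : ℤ := k - m with hx
  set y : ℤ := k + m + 1 with hy
  have hpow : (2 : ℤ) ^ (μ + 2) = 4 * 2 ^ μ := by ring
  have hprod : (2 : ℤ) ^ μ ∣ x * y := by
    have h4 : (4 : ℤ) * 2 ^ μ ∣ 4 * (x * y) := by
      rw [← hpow]
      have : c ^ 2 - a ^ 2 = 4 * (x * y) := by
        rw [hm, hk, hx, hy]; ring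
      rwa [this] at hdvd
    exact (mul_dvd_mul_iff_left (by norm_num : (4:ℤ) ≠ 0)).mp h4
  have hbound : |a| < 2 ^ μ := by
    rw [abs_of_pos ha_pos]
    calc a < 2 ^ (μ - 1) := ha_lt
      _ ≤ 2 ^ μ := pow_le_pow_right₀ (by norm_num) (Nat.sub_le μ 1)
  have hxbound : |x| < 2 ^ μ := by
    have : |c - a| < 2 ^ μ + 2 ^ μ := by
      calc |c - a| ≤ |c| + |a| := abs_sub c a
        _ < 2 ^ μ + 2 ^ μ := by linarith
    have hca : c - a = 2 * x := by rw [hm, hk, hx]; ring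
    rw [hca, abs_mul] at this
    simp only [abs_two] at this
    linarith
  have hybound : |y| < 2 ^ μ := by
    have : |c + a| < 2 ^ μ + 2 ^ μ := by
      calc |c + a| ≤ |c| + |a| := abs_add_le c a
        _ < 2 ^ μ + 2 ^ μ := by linarith
    have hca : c + a = 2 * y := by rw [hm, hk, hy]; ring
    rw [hca, abs_mul] at this
    simp only [abs_two] at this
    linarith
  -- x + y is odd, so x and y have opposite parity
  have hxy : x + y = 2 * k + 1 := by rw [hx, hy]; ring
  rcases Int.even_or_odd x with hxe | hxo
  · -- x even, so y odd, so 2^μ ∣ x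
    have hyo : Odd y := by
      rcases hxe with ⟨t, ht⟩
      refine ⟨k - t, ?_⟩
      omega
    have hcop : IsCoprime ((2:ℤ) ^ μ) y := by
      have : IsCoprime (2:ℤ) y := (Int.prime_two.coprime_iff_not_dvd).mpr
        (by rw [Int.two_dvd_ne_zero]; exact Int.odd_iff.mp hyo)
      exact this.pow_left
    have hdx : (2:ℤ) ^ μ ∣ x := hcop.dvd_of_dvd_mul_right hprod
    have : x = 0 := Int.eq_zero_of_abs_lt_dvd hdx hxbound
    left; omega
  · -- x odd, so 2^μ ∣ y
    have hcop : IsCoprime ((2:ℤ) ^ μ) x := by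
      have : IsCoprime (2:ℤ) x := (Int.prime_two.coprime_iff_not_dvd).mpr
        (by rw [Int.two_dvd_ne_zero]; exact Int.odd_iff.mp hxo)
      exact this.pow_left
    have hdy : (2:ℤ) ^ μ ∣ y := hcop.dvd_of_dvd_mul_left hprod
    have : y = 0 := Int.eq_zero_of_abs_lt_dvd hdy hybound
    right; omega
end

section
/- Let μ ≥ 3, and let a, c be odd integers with 0 < a < 2^(μ−1) and |c| < 2^μ, such that ν₂(c² − a²) = μ + 1. Then |c| = 2^μ − a. -/
theorem stmt_13 (μ : ℕ) (hμ : 3 ≤ μ) (a c : ℤ)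
    (ha_odd : Odd a) (ha_pos : 0 < a) (ha_lt : a < 2 ^ (μ - 1))
    (hc_odd : Odd c) (hc_lt : |c| < 2 ^ μ)
    (hval : padicValInt 2 (c ^ 2 - a ^ 2) = μ + 1) :
    |c| = 2 ^ μ - a := by
  have hne : c ^ 2 - a ^ 2 ≠ 0 := by
    intro h
    rw [h, padicValInt.zero] at hval
    omega
  have hdvd : (2 : ℤ) ^ (μ + 1) ∣ c ^ 2 - a ^ 2 := by
    rw [← hval]
    exact padicValInt_dvd _
  -- write c - a = 2 e₁, c + a = 2 e₂
  obtain ⟨e₁, he₁⟩ : Even (c - a) := hc_odd.sub_odd ha_odd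
  obtain ⟨e₂, he₂⟩ : Even (c + a) := hc_odd.add_odd ha_odd
  have he₁' : c - a = 2 * e₁ := by omega
  have he₂' : c + a = 2 * e₂ := by omega
  have hfac : c ^ 2 - a ^ 2 = 2 ^ 2 * (e₁ * e₂) := by
    have : c ^ 2 - a ^ 2 = (c - a) * (c + a) := by ring
    rw [this, he₁', he₂']; ring
  have hμ1 : μ + 1 = (μ - 1) + 2 := by omega
  have hdvd' : (2 : ℤ) ^ (μ - 1) ∣ e₁ * e₂ := by
    rw [hfac, hμ1, pow_add] at hdvd
    exact (mul_dvd_mul_iff_left (by positivity : (2:ℤ)^2 ≠ 0)).mp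
      (by rwa [mul_comm ((2:ℤ)^(μ-1))] at hdvd)
  have hP : (0:ℤ) < 2 ^ (μ - 1) := by positivity
  have hPm : (2:ℤ) ^ μ = 2 * 2 ^ (μ - 1) := by
    rw [← pow_succ']; congr 1; omega
  have hc2 : c = e₁ + e₂ := by omega
  have habs := abs_cases c
  -- exactly one of e₁, e₂ is odd
  have hkey : ∀ x y : ℤ, Odd x → (2:ℤ) ^ (μ - 1) ∣ x * y → (2:ℤ) ^ (μ - 1) ∣ y := by
    intro x y hx hxy
    have hcop : IsCoprime ((2:ℤ) ^ (μ - 1)) x := by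
      apply IsCoprime.pow_left
      rw [Int.prime_two.coprime_iff_not_dvd]
      intro h2
      obtain ⟨m, hm⟩ := hx
      obtain ⟨n, hn⟩ := h2
      omega
    exact hcop.dvd_of_dvd_mul_left hxy
  rcases Int.even_or_odd e₁ with he | he
  · -- e₁ even, so e₂ odd, and 2^(μ-1) ∣ e₁, hence 2^μ ∣ c - a
    have ho : Odd e₂ := by
      rcases Int.even_or_odd e₂ with h | h
      · exfalso; rcases he with ⟨k, hk⟩; rcases h with ⟨l, hl⟩
        rcases hc_odd with ⟨m, hm⟩; omega
      · exact h
    obtain ⟨k, hk⟩ : (2:ℤ) ^ (μ - 1) ∣ e₁ :=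
      hkey e₂ e₁ ho (by rwa [mul_comm] at hdvd')
    -- c - a = 2 * 2^(μ-1) * k = 2^μ * k, and |c - a| < 2^μ + 2^(μ-1)
    have hb1 : c - a < 2 ^ μ + 2 ^ (μ - 1) := by omega
    have hb2 : -(2 ^ μ + 2 ^ (μ - 1)) < c - a := by omega
    have hk1 : k = -1 ∨ k = 0 ∨ k = 1 := by
      rcases lt_trichotomy k 0 with h | h | h
      · left
        by_contra hne'
        have : k ≤ -2 := by omega
        nlinarith [hb2, hPm, he₁', hk]
      · right; left; exact h
      · right; right
        by_contra hne'
        have : 2 ≤ k := by omega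
        nlinarith [hb1, hPm, he₁', hk]
    rcases hk1 with h | h | h <;>
      rw [h] at hk <;> simp only [mul_neg_one, mul_zero, mul_one] at hk
    · -- c - a = -2^μ, so c = a - 2^μ < 0, |c| = 2^μ - a
      have : c = a - 2 ^ μ := by omega
      have hc0 : c < 0 := by omega
      rw [abs_of_neg hc0]; omega
    · -- e₁ = 0 so c = a, contradiction with hne
      exfalso
      apply hne
      have : c = a := by omega
      rw [this]; ring
    · -- c = a + 2^μ ≥ 2^μ contradiction
      exfalso
      have : c = a + 2 ^ μ := by omega
      rcases habs with ⟨h1, _⟩ | ⟨h1, _⟩ <;> omega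
  · -- e₁ odd, so 2^(μ-1) ∣ e₂, hence 2^μ ∣ c + a
    obtain ⟨k, hk⟩ : (2:ℤ) ^ (μ - 1) ∣ e₂ := hkey e₁ e₂ he hdvd'
    have hb1 : c + a < 2 ^ μ + 2 ^ (μ - 1) := by omega
    have hb2 : -(2 ^ μ + 2 ^ (μ - 1)) < c + a := by omega
    have hk1 : k = -1 ∨ k = 0 ∨ k = 1 := by
      rcases lt_trichotomy k 0 with h | h | h
      · left
        by_contra hne'
        have : k ≤ -2 := by omega
        nlinarith [hb2, hPm, he₂', hk]
      · right; left; exact h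
      · right; right
        by_contra hne'
        have : 2 ≤ k := by omega
        nlinarith [hb1, hPm, he₂', hk]
    rcases hk1 with h | h | h <;>
      rw [h] at hk <;> simp only [mul_neg_one, mul_zero, mul_one] at hk
    · -- c + a = -2^μ, |c| = 2^μ + a > 2^μ contradiction
      exfalso
      have : c = -(2 ^ μ) - a := by omega
      rcases habs with ⟨h1, _⟩ | ⟨h1, _⟩ <;> omega
    · -- c = -a, contradiction with hne
      exfalso
      apply hne
      have : c = -a := by omega
      rw [this]; ring
    · -- c + a = 2^μ, c = 2^μ - a > 0
      have hc0 : 0 < c := by omega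
      rw [abs_of_pos hc0]; omega
end

section
/- Let p be a prime with p ≡ 1 (mod 8), μ = ⌈(1/2)log₂ p⌉, and let a be an odd integer with 0 < a < 2^(μ−1) and a² ≡ p (mod 2^(μ+1)). If there exists an integer c with 1 ≤ |c| < √p and ν₂(c² − p) > ν₂(a² − p), then either (2^μ − a)² < p and ν₂(p − (2^μ − a)²) > ν₂(p − a²), with the maximum of ν₂(t₀² − p) over 1 ≤ |t₀| < √p attained at t₀ = 2^μ − a; or the maximum is attained at t₀ = a. -/
private lemma coprime_two_of_odd' {u : ℤ} (hu : Odd u) : IsCoprime (2:ℤ) u := by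
  obtain ⟨v, rfl⟩ := hu
  exact ⟨-v, 1, by ring⟩

private lemma key_lemma (k : ℕ) (x y : ℤ) (hx : Odd x) (hy : Odd y)
    (hd : (2:ℤ)^(k+2) ∣ x^2 - y^2) (hx' : |x| < 2^k) (hy' : |y| < 2^k) :
    x = y ∨ x = -y := by
  obtain ⟨m, rfl⟩ := hx
  obtain ⟨n, rfl⟩ := hy
  have hd2 : (2:ℤ)^k ∣ (m - n) * (m + n + 1) := by
    obtain ⟨t, ht⟩ := hd
    refine ⟨t, ?_⟩
    have : (2:ℤ)^(k+2) = 2^k * 4 := by rw [pow_add]; norm_num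
    rw [this] at ht
    nlinarith [ht]
  rcases Int.even_or_odd (m - n) with he | ho
  · have hodd : Odd (m + n + 1) := by
      rcases he with ⟨t, ht⟩
      exact ⟨n + t, by omega⟩
    have hdvd : (2:ℤ)^k ∣ m - n :=
      ((coprime_two_of_odd' hodd).pow_left).dvd_of_dvd_mul_right hd2
    have hb : |m - n| < 2^k := by
      have h1 : |2*m+1 - (2*n+1)| ≤ |2*m+1| + |2*n+1| := abs_sub _ _
      have h2 : |2*m+1 - (2*n+1)| = 2 * |m - n| := by
        rw [show 2*m+1 - (2*n+1) = 2*(m-n) by ring, abs_mul]; norm_num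
      linarith
    have := Int.eq_zero_of_abs_lt_dvd hdvd hb
    left; omega
  · have hodd : Odd (m - n) := ho
    have hdvd : (2:ℤ)^k ∣ m + n + 1 :=
      ((coprime_two_of_odd' hodd).pow_left).dvd_of_dvd_mul_left hd2
    have hb : |m + n + 1| < 2^k := by
      have h1 : |2*m+1 + (2*n+1)| ≤ |2*m+1| + |2*n+1| := abs_add_le _ _
      have h2 : |2*m+1 + (2*n+1)| = 2 * |m + n + 1| := by
        rw [show 2*m+1 + (2*n+1) = 2*(m+n+1) by ring, abs_mul]; norm_num
      linarith
    have := Int.eq_zero_of_abs_lt_dvd hdvd hb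
    right; omega

private lemma pv_neg (z : ℤ) : padicValInt 2 (-z) = padicValInt 2 z := by
  simp [padicValInt, Int.natAbs_neg]

private lemma dvd_iff_le_val {n : ℕ} {z : ℤ} (hz : z ≠ 0) :
    (2:ℤ)^n ∣ z ↔ n ≤ padicValInt 2 z := by
  haveI : Fact (Nat.Prime 2) := ⟨by norm_num⟩
  rw [show (2:ℤ) = ((2:ℕ):ℤ) by norm_num, padicValInt_dvd_iff]
  simp [hz]

private lemma val_of_odd {z : ℤ} (hz : Odd z) : padicValInt 2 z = 0 := by
  apply padicValInt.eq_zero_of_not_dvd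
  have := Int.odd_iff.mp hz
  omega

theorem stmt_14 (p : ℕ) (hp : p.Prime) (hp8 : p % 8 = 1)
    (μ : ℕ) (hμ : μ = ⌈Real.logb 2 p / 2⌉₊)
    (a : ℤ) (ha_odd : Odd a) (ha_pos : 0 < a) (ha_lt : a < 2 ^ (μ - 1))
    (ha_sq : (2 : ℤ) ^ (μ + 1) ∣ ((p : ℤ) - a ^ 2))
    (hc : ∃ c : ℤ, 1 ≤ |c| ∧ c ^ 2 < (p : ℤ) ∧
      padicValInt 2 (a ^ 2 - p) < padicValInt 2 (c ^ 2 - p)) :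
    ((2 ^ μ - a) ^ 2 < (p : ℤ) ∧
      padicValInt 2 ((p : ℤ) - a ^ 2) < padicValInt 2 ((p : ℤ) - (2 ^ μ - a) ^ 2) ∧
      ∀ t₀ : ℤ, 1 ≤ |t₀| → t₀ ^ 2 < (p : ℤ) →
        padicValInt 2 (t₀ ^ 2 - p) ≤ padicValInt 2 ((2 ^ μ - a) ^ 2 - p)) ∨
    (∀ t₀ : ℤ, 1 ≤ |t₀| → t₀ ^ 2 < (p : ℤ) →
      padicValInt 2 (t₀ ^ 2 - p) ≤ padicValInt 2 (a ^ 2 - p)) := by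
  haveI : Fact (Nat.Prime 2) := ⟨by norm_num⟩
  -- basic numerics
  have hp17 : 17 ≤ p := by
    have h2 : 2 ≤ p := hp.two_le
    have h9 : p ≠ 9 := by
      intro h; rw [h] at hp; norm_num at hp
    omega
  have hμ3 : 3 ≤ μ := by
    rw [hμ]
    have h4 : (4:ℝ) < Real.logb 2 p := by
      rw [show (4:ℝ) = ((4:ℕ):ℝ) by norm_num,
        Real.lt_logb_iff_rpow_lt (by norm_num) (by positivity), Real.rpow_natCast]
      norm_num
      exact_mod_cast (by omega : 16 < p)
    exact Nat.lt_ceil.mpr (by linarith)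
  -- p < 2^(2μ)
  have hplt : (p : ℤ) < 2 ^ (2*μ) := by
    have h1 : Real.logb 2 p / 2 ≤ μ := by rw [hμ]; exact Nat.le_ceil _
    have h2 : (p:ℝ) ≤ 2 ^ ((2*μ : ℕ) : ℝ) := by
      rw [← Real.logb_le_iff_le_rpow (by norm_num) (by positivity)]
      push_cast
      linarith
    rw [Real.rpow_natCast] at h2
    have h2' : (p : ℤ) ≤ 2 ^ (2*μ) := by exact_mod_cast h2
    rcases h2'.lt_or_eq with h | h
    · exact h
    · exfalso
      have : (p : ℤ) % 2 = 1 := by omega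
      have : (2:ℤ) ^ (2*μ) % 2 = 0 := by
        have : (2:ℤ) ∣ 2 ^ (2*μ) := dvd_pow_self 2 (by omega)
        omega
      omega
  -- 2^(2μ-2) < p
  have hpgt : (2:ℤ) ^ (2*μ - 2) < p := by
    have h1 : (μ:ℝ) < Real.logb 2 p / 2 + 1 := by
      have hnn : 0 ≤ Real.logb 2 p / 2 := by
        have h1p : (1:ℝ) ≤ (p:ℝ) := by exact_mod_cast (by omega : 1 ≤ p)
        have := Real.logb_nonneg (by norm_num : (1:ℝ) < 2) h1p
        linarith
      rw [hμ]; exact Nat.ceil_lt_add_one hnn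
    have h2 : ((2*μ - 2 : ℕ) : ℝ) < Real.logb 2 p := by
      have : ((2*μ - 2 : ℕ) : ℝ) = 2*μ - 2 := by
        push_cast [Nat.cast_sub (by omega : 2 ≤ 2*μ)]; ring
      rw [this]; linarith
    have h3 : (2:ℝ) ^ ((2*μ-2 : ℕ) : ℝ) < p := by
      rw [← Real.lt_logb_iff_rpow_lt (by norm_num) (by positivity)]
      exact h2
    rw [Real.rpow_natCast] at h3
    exact_mod_cast h3
  obtain ⟨c, hc1, hc2, hc3⟩ := hc
  have hpodd : Odd (p:ℤ) := by
    rw [Int.odd_iff]; omega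
  -- |t| < 2^μ for any t with t² < p
  have habs : ∀ t : ℤ, t^2 < (p:ℤ) → |t| < 2^μ := by
    intro t ht
    by_contra h
    push_neg at h
    have e : (2:ℤ)^(2*μ) = 2^μ * 2^μ := by rw [two_mul, pow_add]
    have h2 := mul_le_mul h h (by positivity) (abs_nonneg t)
    have h3 : |t| * |t| = t^2 := by rw [← sq_abs t]; ring
    linarith
  -- oddness of t whenever valuation of t²-p is positive
  have hodd_of : ∀ t : ℤ, 0 < padicValInt 2 (t^2 - p) → Odd t := by
    intro t ht
    rcases Int.even_or_odd t with he | ho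
    · exfalso
      have hesq : Even (t^2) := Int.even_pow.mpr ⟨he, by norm_num⟩
      have : Odd (t^2 - p) := hesq.sub_odd hpodd
      rw [val_of_odd this] at ht
      omega
    · exact ho
  -- a² < p
  have h2e : (2:ℤ)^(μ-1) * 2^(μ-1) = 2^(2*μ-2) := by
    rw [← pow_add]
    congr 1
    omega
  have ha2 : a^2 < (p:ℤ) := by
    have : a^2 < 2^(2*μ-2) := by nlinarith
    linarith
  have hane : a^2 - (p:ℤ) ≠ 0 := by intro h; linarith
  have hcne : c^2 - (p:ℤ) ≠ 0 := by intro h; linarith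
  set m := padicValInt 2 (a^2 - (p:ℤ)) with hm_def
  have hm1 : μ + 1 ≤ m := by
    rw [hm_def, ← dvd_iff_le_val hane]
    have : ((p:ℤ) - a^2) = -(a^2 - p) := by ring
    rw [this, dvd_neg] at ha_sq
    exact ha_sq
  have hcdvd : (2:ℤ)^(m+1) ∣ c^2 - p := by
    rw [dvd_iff_le_val hcne]
    omega
  have hcodd : Odd c := hodd_of c (by omega)
  have hcabs : |c| < 2^μ := habs c hc2
  have haabs : |a| < 2^μ := by
    rw [abs_of_pos ha_pos]
    calc a < 2^(μ-1) := ha_lt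
    _ < 2^μ := by
      apply pow_lt_pow_right₀ (by norm_num)
      omega
  have hadvd : (2:ℤ)^m ∣ a^2 - p := by
    rw [dvd_iff_le_val hane]
  by_cases hA : (2:ℤ)^(μ+2) ∣ ((p:ℤ) - a^2)
  · -- high valuation case: contradiction with hc
    exfalso
    have hm2 : μ + 2 ≤ m := by
      rw [hm_def, ← dvd_iff_le_val hane]
      have : (a^2 - (p:ℤ)) = -((p:ℤ) - a^2) := by ring
      rw [this, dvd_neg]
      exact hA
    have hdiff : (2:ℤ)^m ∣ c^2 - a^2 := by
      have : c^2 - a^2 = (c^2 - p) - (a^2 - p) := by ring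
      rw [this]
      exact dvd_sub (dvd_trans (pow_dvd_pow 2 (by omega)) hcdvd) hadvd
    have hkey := key_lemma (m-2) c a hcodd ha_odd
      (by rw [show m-2+2 = m by omega]; exact hdiff)
      (lt_of_lt_of_le hcabs (pow_le_pow_right₀ (by norm_num) (by omega)))
      (lt_of_lt_of_le haabs (pow_le_pow_right₀ (by norm_num) (by omega)))
    rcases hkey with rfl | rfl
    · omega
    · rw [neg_pow, show (-1:ℤ)^2 = 1 by norm_num, one_mul] at hc3
      omega
  · -- low valuation case: m = μ+1, left disjunct
    left
    have hm2 : m = μ + 1 := by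
      rcases eq_or_lt_of_le hm1 with h | h
      · omega
      · exfalso
        apply hA
        have : (2:ℤ)^(μ+2) ∣ a^2 - p := by
          rw [dvd_iff_le_val hane]; omega
        have he : ((p:ℤ) - a^2) = -(a^2 - p) := by ring
        rw [he, dvd_neg]
        exact this
    set b : ℤ := 2^μ - a with hb_def
    have hb_odd : Odd b := by
      have he : Even ((2:ℤ)^μ) := ⟨2^(μ-1), by
        have h := pow_succ (2:ℤ) (μ-1)
        rw [show μ-1+1 = μ by omega] at h
        rw [h]; ring⟩
      exact he.sub_odd ha_odd
    have hb_pos : 0 < b := by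
      have : a < 2^μ := lt_of_le_of_lt (le_abs_self a) haabs
      omega
    have hb_lt : b < 2^μ := by omega
    have hbabs : |b| < 2^μ := by rw [abs_of_pos hb_pos]; exact hb_lt
    -- 2^(μ+2) ∣ p - b²
    obtain ⟨u, hu⟩ := ha_sq
    have huodd : Odd u := by
      rcases Int.even_or_odd u with ⟨w, hw⟩ | ho
      · exfalso
        apply hA
        refine ⟨w, ?_⟩
        rw [hu, hw, pow_succ]
        ring
      · exact ho
    obtain ⟨w, hw⟩ : Even (u + a) := huodd.add_odd ha_odd
    have e1 : (2:ℤ)^μ = 4 * 2^(μ-2) := by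
      rw [show (4:ℤ) = 2^2 by norm_num, ← pow_add]; congr 1; omega
    have e2 : (2:ℤ)^(μ+1) = 8 * 2^(μ-2) := by
      rw [show (8:ℤ) = 2^3 by norm_num, ← pow_add]; congr 1; omega
    have e3 : (2:ℤ)^(μ+2) = 16 * 2^(μ-2) := by
      rw [show (16:ℤ) = 2^4 by norm_num, ← pow_add]; congr 1; omega
    have hbdvd : (2:ℤ)^(μ+2) ∣ ((p:ℤ) - b^2) := by
      refine ⟨w - 2^(μ-2), ?_⟩
      rw [hb_def, e1, e3]
      rw [e2] at hu
      linear_combination hu + 8 * (2:ℤ)^(μ-2) * hw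
    -- b² < p
    have hb2 : b^2 < (p:ℤ) := by
      by_contra hge
      push_neg at hge
      have hcd2 : (2:ℤ)^(μ+2) ∣ c^2 - p := dvd_trans (pow_dvd_pow 2 (by omega)) hcdvd
      have hdiff : (2:ℤ)^(μ+2) ∣ c^2 - b^2 := by
        have : c^2 - b^2 = (c^2 - p) + ((p:ℤ) - b^2) := by ring
        rw [this]
        exact dvd_add hcd2 hbdvd
      have hkey := key_lemma μ c b hcodd hb_odd hdiff hcabs hbabs
      rcases hkey with rfl | rfl
      · linarith
      · rw [neg_pow, show (-1:ℤ)^2 = 1 by norm_num, one_mul] at hc2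
        linarith
    have hbne : b^2 - (p:ℤ) ≠ 0 := by intro h; linarith
    refine ⟨hb2, ?_, ?_⟩
    · -- valuation comparison
      have hv1 : padicValInt 2 ((p:ℤ) - a^2) = m := by
        rw [show (p:ℤ) - a^2 = -(a^2 - p) by ring, pv_neg]
      have hv2 : μ + 2 ≤ padicValInt 2 ((p:ℤ) - b^2) := by
        rw [← dvd_iff_le_val (by intro h; exact hbne (by linarith) : (p:ℤ) - b^2 ≠ 0)]
        exact hbdvd
      omega
    · intro t₀ ht1 ht2
      set M := padicValInt 2 (b^2 - (p:ℤ)) with hM_def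
      have hM : μ + 2 ≤ M := by
        rw [hM_def, ← dvd_iff_le_val hbne, show b^2 - (p:ℤ) = -((p:ℤ) - b^2) by ring, dvd_neg]
        exact hbdvd
      by_contra hcon
      push_neg at hcon
      have htne : t₀^2 - (p:ℤ) ≠ 0 := by intro h; linarith
      have htodd : Odd t₀ := hodd_of t₀ (by omega)
      have htabs : |t₀| < 2^μ := habs t₀ ht2
      have htdvd : (2:ℤ)^(M+1) ∣ t₀^2 - p := by
        rw [dvd_iff_le_val htne]; omega
      have hbdvd2 : (2:ℤ)^M ∣ b^2 - p := by rw [dvd_iff_le_val hbne]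
      have hdiff : (2:ℤ)^M ∣ t₀^2 - b^2 := by
        have : t₀^2 - b^2 = (t₀^2 - p) - (b^2 - p) := by ring
        rw [this]
        exact dvd_sub (dvd_trans (pow_dvd_pow 2 (by omega)) htdvd) hbdvd2
      have hkey := key_lemma (M-2) t₀ b htodd hb_odd
        (by rw [show M-2+2 = M by omega]; exact hdiff)
        (lt_of_lt_of_le htabs (pow_le_pow_right₀ (by norm_num) (by omega)))
        (lt_of_lt_of_le hbabs (pow_le_pow_right₀ (by norm_num) (by omega)))
      rcases hkey with rfl | rfl
      · omega
      · rw [neg_pow, show (-1:ℤ)^2 = 1 by norm_num, one_mul] at hcon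
        omega
end

section
/- Let p be a prime with p ≡ 1 (mod 8) and μ = ⌈(1/2)log₂ p⌉. Then there exists an integer t₀ with 1 ≤ |t₀| < √p such that ν₂(t₀² − p) ≥ μ + 1. Consequently the maximum of ν₂(t² − 4p) over integers t with 1 ≤ |t| ≤ 2√p and p ∤ t is at least μ + 3. -/
lemma sqrt_mod_two_pow (p : ℕ) (hp8 : p % 8 = 1) :
    ∀ k : ℕ, ∃ a : ℤ, Odd a ∧ (2:ℤ)^(k+3) ∣ a^2 - p := by
  intro k
  induction k with
  | zero =>
    refine ⟨1, odd_one, ?_⟩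
    have : (p : ℤ) % 8 = 1 := by omega
    have : (8:ℤ) ∣ 1^2 - p := by omega
    simpa using this
  | succ k ih =>
    obtain ⟨a, ha, hd⟩ := ih
    by_cases h : (2:ℤ)^(k+4) ∣ a^2 - p
    · exact ⟨a, ha, by simpa [show k+1+3 = k+4 from rfl] using h⟩
    · refine ⟨a + 2^(k+2), ?_, ?_⟩
      · exact ha.add_even ⟨2^(k+1), by ring⟩
      · obtain ⟨m, hm⟩ := hd
        have hmodd : ¬ (2:ℤ) ∣ m := by
          intro ⟨c, hc⟩
          apply h
          rw [hm, hc]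
          exact ⟨c, by ring⟩
        have hmo : Odd m := by
          rw [Int.odd_iff]; rw [Int.two_dvd_ne_zero] at hmodd; exact hmodd
        obtain ⟨b, hb⟩ : (2:ℤ) ∣ m + a := by
          rcases ha with ⟨s, hs⟩; rcases hmo with ⟨u, hu⟩; exact ⟨u + s + 1, by omega⟩
        have hexp : (a + 2^(k+2))^2 - p = 2^(k+4) * (b + 2^k) := by
          have : (a + 2^(k+2))^2 - p = (a^2 - p) + 2^(k+3)*a + 2^(2*k+4) := by ring
          rw [this, hm]
          have h1 : (2:ℤ)^(k+3)*m + 2^(k+3)*a = 2^(k+4)*b := by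
            rw [show (2:ℤ)^(k+4) = 2^(k+3)*2 by ring]
            calc (2:ℤ)^(k+3)*m + 2^(k+3)*a = 2^(k+3)*(m+a) := by ring
              _ = 2^(k+3)*2*b := by rw [hb]; ring
          have h2 : (2:ℤ)^(2*k+4) = 2^(k+4) * 2^k := by rw [← pow_add]; ring_nf
          calc (2:ℤ)^(k+3)*m + 2^(k+3)*a + 2^(2*k+4)
              = 2^(k+4)*b + 2^(k+4)*2^k := by rw [h1, h2]
            _ = 2^(k+4) * (b + 2^k) := by ring
        exact ⟨b + 2^k, by rw [show k+1+3 = k+4 from rfl]; exact hexp⟩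

lemma reduce_root (p μ : ℕ) (hμ3 : 3 ≤ μ) (a : ℤ) (ha : Odd a)
    (hd : (2:ℤ)^(μ+1) ∣ a^2 - p) :
    ∃ b : ℤ, Odd b ∧ 0 < b ∧ b < 2^(μ-1) ∧ (2:ℤ)^(μ+1) ∣ b^2 - p := by
  obtain ⟨ν, rfl⟩ : ∃ ν, μ = ν + 1 := ⟨μ - 1, by omega⟩
  have hν : 1 ≤ ν := by omega
  set r := a % 2^(ν+1) with hr
  have hq : a = 2^(ν+1) * (a / 2^(ν+1)) + r := (Int.mul_ediv_add_emod a _).symm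
  set q := a / 2^(ν+1)
  have hrpos : 0 ≤ r := Int.emod_nonneg a (by positivity)
  have hrlt : r < 2^(ν+1) := Int.emod_lt_of_pos a (by positivity)
  have hrodd : Odd r := by
    rw [Int.odd_iff] at ha ⊢
    have hq2 : a = 2*(2^ν*q) + r := by rw [hq]; ring
    omega
  have hr2 : (2:ℤ)^(ν+1+1) ∣ r^2 - a^2 := by
    have : r^2 - a^2 = (2^(ν+1)*q) * (-(r + a)) := by
      have : r = a - 2^(ν+1)*q := by omega
      rw [this]; ring
    rw [this]
    obtain ⟨c, hc⟩ : (2:ℤ) ∣ r + a := by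
      rcases hrodd with ⟨s, hs⟩; rcases ha with ⟨t, ht⟩; exact ⟨s + t + 1, by omega⟩
    exact ⟨q * (-c), by rw [hc]; ring⟩
  have hrd : (2:ℤ)^(ν+1+1) ∣ r^2 - p := by
    have := dvd_add hr2 hd
    simpa using this
  by_cases hcase : r < 2^ν
  · have := Int.odd_iff.mp hrodd
    exact ⟨r, hrodd, by omega, by simpa using hcase, hrd⟩
  · refine ⟨2^(ν+1) - r, ?_, by omega, ?_, ?_⟩
    · rcases hrodd with ⟨s, hs⟩
      exact ⟨2^ν - s - 1, by rw [hs]; ring⟩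
    · have hne : r ≠ 2^ν := by
        intro h
        rcases hrodd with ⟨s, hs⟩
        have : (2:ℤ)^ν = 2 * 2^(ν-1) := by
          rw [← pow_succ']; congr 1; omega
        omega
      have : (2:ℤ)^(ν+1) = 2 * 2^ν := by ring
      simp only [show ν+1-1 = ν from rfl]
      omega
    · have h2 : (2:ℤ)^(ν+1)*2^(ν+1) = 2^(ν+1+1)*2^ν := by
        rw [← pow_add, ← pow_add]; ring_nf
      have h3 : (2:ℤ)^(ν+1+1) = 2*2^(ν+1) := by ring
      have heq : (2^(ν+1) - r)^2 - (p:ℤ) = (r^2 - p) + 2^(ν+1+1)*(2^ν - r) := by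
        linear_combination h2 + r * h3
      rw [heq]
      exact dvd_add hrd ⟨2^ν - r, rfl⟩

theorem stmt_15 (p : ℕ) (hp : p.Prime) (hp8 : p % 8 = 1)
    (μ : ℕ) (hμ : μ = ⌈Real.logb 2 p / 2⌉₊) :
    (∃ t₀ : ℤ, 1 ≤ |t₀| ∧ t₀ ^ 2 < (p : ℤ) ∧
      μ + 1 ≤ padicValInt 2 (t₀ ^ 2 - p)) ∧
    (∃ t : ℤ, 1 ≤ |t| ∧ t ^ 2 ≤ 4 * (p : ℤ) ∧ ¬ (p : ℤ) ∣ t ∧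
      μ + 3 ≤ padicValInt 2 (t ^ 2 - 4 * p)) := by
  haveI : Fact (Nat.Prime 2) := ⟨Nat.prime_two⟩
  have hp17 : 17 ≤ p := by
    have h1 : p ≠ 1 := hp.ne_one
    have h9 : p ≠ 9 := by rintro rfl; exact absurd hp (by decide)
    have := hp.two_le
    omega
  set x : ℝ := Real.logb 2 p / 2 with hx
  have hplog : Real.logb 2 p = Real.logb 2 p := rfl
  have hp0 : (0:ℝ) < p := by positivity
  have hxgt : (2:ℝ) < x := by
    have h16 : (16:ℝ) < p := by exact_mod_cast (by omega : 16 < p)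
    have : (4:ℝ) < Real.logb 2 p := by
      rw [Real.lt_logb_iff_rpow_lt (by norm_num) hp0]
      rw [show ((4:ℝ)) = ((4:ℕ):ℝ) by norm_num, Real.rpow_natCast]
      norm_num; linarith
    rw [hx]; linarith
  have hμ3 : 3 ≤ μ := by
    rw [hμ]
    exact Nat.lt_ceil.mpr (by exact_mod_cast hxgt)
  have hceil : (μ:ℝ) - 1 < x := by
    have : (⌈x⌉₊:ℝ) < x + 1 := Nat.ceil_lt_add_one (by linarith)
    rw [hμ]; push_cast; linarith
  -- 2^(2*(μ-1)) < p
  have key : ∀ m : ℕ, (m:ℝ) < Real.logb 2 p → 2^m < p := by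
    intro m hm
    have h2 : (2:ℝ)^(m:ℝ) < (2:ℝ)^(Real.logb 2 p) :=
      Real.rpow_lt_rpow_left_iff (by norm_num) |>.mpr hm
    rw [Real.rpow_logb (by norm_num) (by norm_num) hp0, Real.rpow_natCast] at h2
    exact_mod_cast h2
  have hlog2x : Real.logb 2 p = 2 * x := by rw [hx]; ring
  have hlt1 : 2^(2*(μ-1)) < p := by
    apply key
    have hcast : ((2*(μ-1) : ℕ) : ℝ) = 2*((μ:ℝ)-1) := by
      rw [Nat.cast_mul, Nat.cast_sub (show 1 ≤ μ by omega)]; push_cast; ring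
    rw [hcast, hlog2x]; linarith
  have hlt2 : 2^μ < p := by
    apply key
    rw [hlog2x]; linarith
  -- get the root
  obtain ⟨a, ha, hd⟩ := sqrt_mod_two_pow p hp8 (μ - 2)
  rw [show μ - 2 + 3 = μ + 1 by omega] at hd
  obtain ⟨b, hbodd, hbpos, hblt, hbd⟩ := reduce_root p μ hμ3 a ha hd
  have hb2 : b^2 < (p:ℤ) := by
    have h1 : b^2 < ((2:ℤ)^(μ-1))^2 := by nlinarith
    have h2 : ((2:ℤ)^(μ-1))^2 = 2^(2*(μ-1)) := by rw [← pow_mul, Nat.mul_comm]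
    have h3 : (2:ℤ)^(2*(μ-1)) < p := by exact_mod_cast hlt1
    rw [h2] at h1; linarith
  have hbne : b^2 - (p:ℤ) ≠ 0 := by omega
  constructor
  · refine ⟨b, ?_, hb2, ?_⟩
    · rw [abs_of_pos hbpos]; omega
    · have := (padicValInt_dvd_iff (p := 2) (μ+1) (b^2 - p)).mp (by exact_mod_cast hbd)
      tauto
  · refine ⟨2*b, ?_, by nlinarith, ?_, ?_⟩
    · rw [abs_of_pos (by omega)]; omega
    · intro hdvd
      have h2b : 2*b < (p:ℤ) := by
        have : 2*b < 2*2^(μ-1) := by omega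
        have h2 : (2:ℤ)*2^(μ-1) = 2^μ := by
          rw [← pow_succ']; congr 1; omega
        have h3 : (2:ℤ)^μ < p := by exact_mod_cast hlt2
        omega
      have := Int.le_of_dvd (by omega) hdvd
      omega
    · have hdvd4 : (2:ℤ)^(μ+3) ∣ (2*b)^2 - 4*p := by
        obtain ⟨c, hc⟩ := hbd
        refine ⟨c, ?_⟩
        have : (2*b)^2 - 4*(p:ℤ) = 4*(b^2 - p) := by ring
        rw [this, hc, show (μ+3) = (μ+1)+2 by ring]
        ring
      have hne : (2*b)^2 - 4*(p:ℤ) ≠ 0 := by nlinarith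
      have := (padicValInt_dvd_iff (p := 2) (μ+3) ((2*b)^2 - 4*p)).mp (by exact_mod_cast hdvd4)
      tauto
end

section
/- Let p be an odd prime, t an integer with 1 ≤ |t| < 2p, and suppose e := ν₂(t² − 4p²) ≥ 2. Then t = 2t₀ with 1 ≤ |t₀| < p, and there exists a sign ε ∈ {±1} and an integer b > 0 with p + ε·t₀ = 2^(e−3)·b if e ≥ 3; in particular 2^(e−3) < 2p. -/
theorem stmt_17 (p : ℕ) (hp : p.Prime) (hodd : Odd p) (t : ℤ)
    (ht1 : 1 ≤ |t|) (ht2 : |t| < 2 * p)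
    (e : ℕ) (he : e = padicValInt 2 (t ^ 2 - 4 * (p : ℤ) ^ 2)) (he2 : 2 ≤ e) :
    ∃ t₀ : ℤ, t = 2 * t₀ ∧ 1 ≤ |t₀| ∧ |t₀| < p ∧
      (3 ≤ e → (∃ ε : ℤ, (ε = 1 ∨ ε = -1) ∧ ∃ b : ℤ, 0 < b ∧
        (p : ℤ) + ε * t₀ = 2 ^ (e - 3) * b) ∧ (2 : ℤ) ^ (e - 3) < 2 * p) := by
  haveI : Fact (Nat.Prime 2) := ⟨Nat.prime_two⟩
  have hpo : Odd p := hodd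
  have hp1 : 1 ≤ p := hp.one_lt.le
  -- nonzero
  have htsq : t ^ 2 < 4 * (p : ℤ) ^ 2 := by nlinarith [sq_abs t, abs_nonneg t]
  have hne : t ^ 2 - 4 * (p : ℤ) ^ 2 ≠ 0 := by nlinarith
  -- t is even
  have h2e : (2 : ℤ) ^ e ∣ t ^ 2 - 4 * (p : ℤ) ^ 2 := by
    have h := padicValInt_dvd (p := 2) (t ^ 2 - 4 * (p : ℤ) ^ 2)
    rw [← he] at h
    exact_mod_cast h
  have h4dvd : (4 : ℤ) ∣ t ^ 2 - 4 * (p : ℤ) ^ 2 := by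
    have : (4 : ℤ) = 2 ^ 2 := by norm_num
    rw [this]
    exact dvd_trans (pow_dvd_pow 2 he2) h2e
  have h2t : (2 : ℤ) ∣ t := by
    have h4t : (4 : ℤ) ∣ t ^ 2 := by
      have : (4 : ℤ) ∣ 4 * (p : ℤ) ^ 2 := ⟨(p:ℤ)^2, rfl⟩
      omega
    exact Int.prime_two.dvd_of_dvd_pow (dvd_trans (by norm_num) h4t)
  obtain ⟨t₀, ht⟩ := h2t
  subst ht
  have habs : |2 * t₀| = 2 * |t₀| := by rw [abs_mul]; norm_num
  rw [habs] at ht1 ht2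
  refine ⟨t₀, rfl, by omega, by omega, ?_⟩
  intro he3
  -- the factors
  have hA : (0 : ℤ) < (p : ℤ) + t₀ := by
    have := neg_abs_le t₀; omega
  have hB : (0 : ℤ) < (p : ℤ) - t₀ := by
    have := le_abs_self t₀; omega
  set A : ℤ := (p : ℤ) + t₀ with hAdef
  set B : ℤ := (p : ℤ) - t₀ with hBdef
  have hfac : (2 * t₀) ^ 2 - 4 * (p : ℤ) ^ 2 = -(4 * (A * B)) := by ring
  have haA : A.natAbs ≠ 0 := Int.natAbs_ne_zero.mpr hA.ne'
  have haB : B.natAbs ≠ 0 := Int.natAbs_ne_zero.mpr hB.ne'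
  have hsum : A.natAbs + B.natAbs = 2 * p := by
    have h1 : (A.natAbs : ℤ) = A := Int.natAbs_of_nonneg hA.le
    have h2 : (B.natAbs : ℤ) = B := Int.natAbs_of_nonneg hB.le
    have : ((A.natAbs + B.natAbs : ℕ) : ℤ) = ((2 * p : ℕ) : ℤ) := by
      push_cast [h1, h2]; ring
    exact_mod_cast this
  -- valuation split
  have heval : e = 2 + (padicValNat 2 A.natAbs + padicValNat 2 B.natAbs) := by
    rw [he, hfac]
    unfold padicValInt
    have h0 : (-(4 * (A * B))).natAbs = 2 ^ 2 * (A.natAbs * B.natAbs) := by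
      rw [Int.natAbs_neg, Int.natAbs_mul, Int.natAbs_mul]; norm_num
    rw [h0, padicValNat.mul (by positivity) (Nat.mul_ne_zero haA haB),
      padicValNat.prime_pow, padicValNat.mul haA haB]
  set x := padicValNat 2 A.natAbs with hx
  set y := padicValNat 2 B.natAbs with hy
  -- both factors even
  have hABeven : 2 ∣ A.natAbs ∧ 2 ∣ B.natAbs := by
    have hmul : 2 ∣ A.natAbs * B.natAbs := by
      have : (2:ℕ) ^ 1 ∣ A.natAbs * B.natAbs := by
        rw [padicValNat_dvd_iff_le (Nat.mul_ne_zero haA haB),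
          padicValNat.mul haA haB]
        omega
      simpa using this
    have := (Nat.prime_two.dvd_mul).mp hmul
    omega
  have hx1 : 1 ≤ x := one_le_padicValNat_of_dvd haA hABeven.1
  have hy1 : 1 ≤ y := one_le_padicValNat_of_dvd haB hABeven.2
  -- not both ≥ 2
  have hpodd : ¬ (2 ∣ p) := hp.odd_of_ne_two (by rintro rfl; exact (by norm_num : ¬ Odd 2) hodd) |>.not_two_dvd_nat
  have hnot : ¬ (2 ≤ x ∧ 2 ≤ y) := by
    rintro ⟨hx2, hy2⟩
    have d1 : (2:ℕ) ^ 2 ∣ A.natAbs := by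
      rw [padicValNat_dvd_iff_le haA]; omega
    have d2 : (2:ℕ) ^ 2 ∣ B.natAbs := by
      rw [padicValNat_dvd_iff_le haB]; omega
    have : (4:ℕ) ∣ 2 * p := by
      have := Nat.dvd_add d1 d2
      rw [hsum] at this
      simpa using this
    omega
  -- pick the factor with large valuation
  have hkey : ∀ C : ℤ, 0 < C → C < 2 * p → (2:ℕ) ^ (e - 3) ∣ C.natAbs →
      (∃ b : ℤ, 0 < b ∧ C = 2 ^ (e - 3) * b) ∧ (2 : ℤ) ^ (e - 3) < 2 * p := by
    intro C hC hC2 hdvd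
    have hdvdZ : (2 : ℤ) ^ (e - 3) ∣ C := by
      have h := Int.natCast_dvd_natCast.mpr hdvd
      rw [Int.natAbs_of_nonneg hC.le] at h
      exact_mod_cast h
    obtain ⟨b, hb⟩ := hdvdZ
    have hpow : (0:ℤ) < 2 ^ (e - 3) := by positivity
    have hbpos : 0 < b := by nlinarith
    have hle : (2:ℤ) ^ (e - 3) ≤ C := by
      calc (2:ℤ) ^ (e-3) ≤ 2 ^ (e-3) * b := by nlinarith
        _ = C := hb.symm
    exact ⟨⟨b, hbpos, hb⟩, by omega⟩
  have hAbd : A < 2 * p := by have := le_abs_self t₀; omega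
  have hBbd : B < 2 * p := by have := neg_abs_le t₀; omega
  rcases (by omega : x = 1 ∨ y = 1) with h1 | h1
  · -- y = e - 3, use ε = -1? no: valuation of B is e-3, B = p - t₀ = p + (-1)*t₀
    have hyv : y = e - 3 := by omega
    have hdvd : (2:ℕ) ^ (e - 3) ∣ B.natAbs := by
      rw [padicValNat_dvd_iff_le haB]; omega
    obtain ⟨⟨b, hbpos, hb⟩, hbd⟩ := hkey B hB hBbd hdvd
    exact ⟨⟨-1, Or.inr rfl, b, hbpos, by rw [← hb]; ring⟩, hbd⟩
  · have hxv : x = e - 3 := by omega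
    have hdvd : (2:ℕ) ^ (e - 3) ∣ A.natAbs := by
      rw [padicValNat_dvd_iff_le haA]; omega
    obtain ⟨⟨b, hbpos, hb⟩, hbd⟩ := hkey A hA hAbd hdvd
    exact ⟨⟨1, Or.inl rfl, b, hbpos, by rw [← hb]; ring⟩, hbd⟩
end
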